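/- Let a, b, c be integers with ab + bc + ca ≠ 0. Let N be the ℤ-submodule of ℤ⁴ = (Fin 4 → ℤ) spanned by the four vectors (a,0,0,1), (0,b,0,1), (0,0,c,1), and (1,1,1,0). Then the quotient group ℤ⁴/N is finite and its cardinality equals |ab + bc + ca|. -/

import Mathlib

open Matrix in
lemma aux_index_span_range_det {n : ℕ} (A : Matrix (Fin n) (Fin n) ℤ) (hA : A.det ≠ 0) :
    (Submodule.span ℤ (Set.range A)).toAddSubgroup.index = A.det.natAbs := by
  classical
  set N : Submodule ℤ (Fin n → ℤ) := Submodule.span ℤ (Set.range A) with hNdef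
  have hrange : LinearMap.range (Matrix.mulVecLin Aᵀ) = N := by
    rw [Matrix.range_mulVecLin]; rfl
  have hdetT : (Aᵀ).det ≠ 0 := by rwa [Matrix.det_transpose]
  have hf : Function.Injective (Matrix.mulVecLin Aᵀ) := by
    intro x y hxy
    simp only [Matrix.mulVecLin_apply] at hxy
    have h1 := congrArg (fun v => Aᵀ.adjugate *ᵥ v) hxy
    simp only [Matrix.mulVec_mulVec] at h1
    rw [Matrix.adjugate_mul,
      Matrix.smul_mulVec, Matrix.smul_mulVec, Matrix.one_mulVec,
      Matrix.one_mulVec] at h1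
    exact smul_right_injective (Fin n → ℤ) hdetT h1
  let e : (Fin n → ℤ) ≃ₗ[ℤ] N :=
    (LinearEquiv.ofInjective _ hf).trans (LinearEquiv.ofEq _ _ hrange)
  have hindex : N.toAddSubgroup.index ≠ 0 :=
    Int.submodule_toAddSubgroup_index_ne_zero_iff.mpr ⟨e.symm⟩
  obtain ⟨m, snf⟩ := N.smithNormalForm (Pi.basisFun ℤ (Fin n))
  have hm : n = m := by
    have := snf.toAddSubgroup_index_ne_zero_iff.mp hindex
    simpa using this.symm
  subst hm
  -- index side
  have key : ∀ x : ℤ, (Ideal.span {x}).toAddSubgroup.index = x.natAbs := by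
    intro x
    rw [← Int.index_zmultiples]
    congr 1
    ext y
    simp [Ideal.mem_span_singleton, AddSubgroup.mem_zmultiples_iff]
  have hidx : N.toAddSubgroup.index = (∏ i, snf.a i).natAbs := by
    rw [snf.toAddSubgroup_index_eq_ite, if_pos (by simp)]
    simp only [key]
    exact (map_prod Int.natAbsHom snf.a Finset.univ).symm
  -- determinant side
  set eb : Module.Basis (Fin n) ℤ (Fin n → ℤ) := Pi.basisFun ℤ (Fin n) with hebdef
  let σ : Fin n ≃ Fin n := Equiv.ofBijective snf.f
    ((Fintype.bijective_iff_injective_and_card snf.f).mpr ⟨snf.f.injective, rfl⟩)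
  let B : Module.Basis (Fin n) ℤ (Fin n → ℤ) := snf.bM.reindex σ.symm
  have hB : ∀ j, B j = snf.bM (snf.f j) := fun j => by simp [B, σ]
  let g : (Fin n → ℤ) →ₗ[ℤ] (Fin n → ℤ) :=
    N.subtype ∘ₗ (snf.bN.equivFun.symm : (Fin n → ℤ) →ₗ[ℤ] N)
  have hgj : ∀ j, g (eb j) = snf.a j • snf.bM (snf.f j) := by
    intro j
    have h1 : snf.bN.equivFun.symm (eb j) = snf.bN j := by
      apply snf.bN.equivFun.injective
      rw [LinearEquiv.apply_symm_apply]
      ext i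
      simp [Module.Basis.equivFun_apply, hebdef, Pi.basisFun_apply, Pi.single_apply, eq_comm]
    show N.subtype (snf.bN.equivFun.symm (eb j)) = _
    rw [h1, ← snf.snf j]
    rfl
  have hg : LinearMap.toMatrix eb B g = Matrix.diagonal snf.a := by
    ext i j
    rw [LinearMap.toMatrix_apply, hgj, ← hB]
    rw [_root_.map_smul, Module.Basis.repr_self]
    simp only [Matrix.diagonal, Finsupp.smul_single, smul_eq_mul, mul_one,
      Finsupp.single_apply, Matrix.of_apply]
    rcases eq_or_ne i j with rfl|hij
    · simp
    · simp [hij, Ne.symm hij]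
  let u : (Fin n → ℤ) ≃ₗ[ℤ] (Fin n → ℤ) := e.trans snf.bN.equivFun
  have hfg : A.det.natAbs = (LinearMap.det g).natAbs := by
    have hu : Matrix.mulVecLin Aᵀ = g ∘ₗ (u : (Fin n → ℤ) →ₗ[ℤ] (Fin n → ℤ)) := by
      apply LinearMap.ext
      intro x
      show _ = N.subtype (snf.bN.equivFun.symm (snf.bN.equivFun (e x)))
      rw [LinearEquiv.symm_apply_apply]
      show _ = ((e x : N) : Fin n → ℤ)
      simp [e]
    have hd : LinearMap.det (Matrix.mulVecLin Aᵀ) = Aᵀ.det := by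
      rw [← Matrix.toLin'_apply', LinearMap.det_toLin']
    have := LinearEquiv.isUnit_det' u
    calc A.det.natAbs = (LinearMap.det (Matrix.mulVecLin Aᵀ)).natAbs := by
          rw [hd, Matrix.det_transpose]
      _ = (LinearMap.det g * LinearMap.det (u : (Fin n → ℤ) →ₗ[ℤ] (Fin n → ℤ))).natAbs := by
          rw [hu, LinearMap.det_comp]
      _ = (LinearMap.det g).natAbs := by
          rcases Int.isUnit_iff.mp this with hh|hh <;> simp [hh, Int.natAbs_mul]
  have h1 : LinearMap.toMatrix B eb (LinearMap.id) * LinearMap.toMatrix eb B (LinearMap.id) = 1 := by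
    rw [← LinearMap.toMatrix_comp eb B eb, LinearMap.id_comp, LinearMap.toMatrix_id]
  have hdetg : (LinearMap.det g).natAbs = (∏ i, snf.a i).natAbs := by
    have h2 : LinearMap.det g = ((LinearMap.toMatrix eb eb) g).det :=
      (LinearMap.det_toMatrix _ _).symm
    have h3 : LinearMap.toMatrix eb eb g
        = LinearMap.toMatrix B eb (LinearMap.id) * LinearMap.toMatrix eb B g := by
      rw [← LinearMap.toMatrix_comp eb B eb, LinearMap.id_comp]
    have hu2 : IsUnit (LinearMap.toMatrix B eb (LinearMap.id)).det :=
      Matrix.isUnit_det_of_right_inverse h1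
    rw [h2, h3, Matrix.det_mul, hg, Matrix.det_diagonal, Int.natAbs_mul]
    rcases Int.isUnit_iff.mp hu2 with hh|hh <;> rw [hh] <;> simp
  rw [hidx, ← hdetg, ← hfg]

theorem card_quotient_seifert_relations (a b c : ℤ) (h : a * b + b * c + c * a ≠ 0) :
    Finite ((Fin 4 → ℤ) ⧸
      Submodule.span ℤ ({![a, 0, 0, 1], ![0, b, 0, 1], ![0, 0, c, 1], ![1, 1, 1, 0]} :
        Set (Fin 4 → ℤ))) ∧
    Nat.card ((Fin 4 → ℤ) ⧸
      Submodule.span ℤ ({![a, 0, 0, 1], ![0, b, 0, 1], ![0, 0, c, 1], ![1, 1, 1, 0]} :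
        Set (Fin 4 → ℤ))) = (a * b + b * c + c * a).natAbs := by
  set A : Matrix (Fin 4) (Fin 4) ℤ :=
    Matrix.of ![![a, 0, 0, 1], ![0, b, 0, 1], ![0, 0, c, 1], ![1, 1, 1, 0]] with hAdef
  have hs : Set.range A
      = ({![a, 0, 0, 1], ![0, b, 0, 1], ![0, 0, c, 1], ![1, 1, 1, 0]} : Set (Fin 4 → ℤ)) := by
    ext v
    simp only [Set.mem_range, Set.mem_insert_iff, Set.mem_singleton_iff]
    constructor
    · rintro ⟨i, rfl⟩
      fin_cases i
      · exact Or.inl rfl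
      · exact Or.inr (Or.inl rfl)
      · exact Or.inr (Or.inr (Or.inl rfl))
      · exact Or.inr (Or.inr (Or.inr rfl))
    · rintro (rfl|rfl|rfl|rfl)
      exacts [⟨0, rfl⟩, ⟨1, rfl⟩, ⟨2, rfl⟩, ⟨3, rfl⟩]
  have hdet : A.det = -(a * b + b * c + c * a) := by
    simp [hAdef, Matrix.det_succ_row_zero, Fin.sum_univ_succ, Fin.castSucc, Fin.castAdd,
      Fin.castLE, Matrix.cons_val', Matrix.cons_val_zero, Matrix.cons_val_one]
    simp [Fin.succAbove]
    ring
  have hA : A.det ≠ 0 := by rw [hdet]; exact neg_ne_zero.mpr h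
  have hone : Nat.card ((Fin 4 → ℤ) ⧸
      Submodule.span ℤ ({![a, 0, 0, 1], ![0, b, 0, 1], ![0, 0, c, 1], ![1, 1, 1, 0]} :
        Set (Fin 4 → ℤ))) = (a * b + b * c + c * a).natAbs := by
    have hrfl : Nat.card ((Fin 4 → ℤ) ⧸
        Submodule.span ℤ ({![a, 0, 0, 1], ![0, b, 0, 1], ![0, 0, c, 1], ![1, 1, 1, 0]} :
          Set (Fin 4 → ℤ)))
        = (Submodule.span ℤ ({![a, 0, 0, 1], ![0, b, 0, 1], ![0, 0, c, 1], ![1, 1, 1, 0]} :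
          Set (Fin 4 → ℤ))).toAddSubgroup.index := rfl
    rw [hrfl, ← hs, aux_index_span_range_det A hA, hdet, Int.natAbs_neg]
  refine ⟨?_, hone⟩
  have hne : Nat.card ((Fin 4 → ℤ) ⧸
      Submodule.span ℤ ({![a, 0, 0, 1], ![0, b, 0, 1], ![0, 0, c, 1], ![1, 1, 1, 0]} :
        Set (Fin 4 → ℤ))) ≠ 0 := by
    rw [hone]; exact Int.natAbs_ne_zero.mpr h
  exact (Nat.card_ne_zero.mp hne).2
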